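/- Assume there exists at least one invariant complex structure Ψ₀ ⊆ Δ_nc, and assume the positive system is non-classical, i.e. there exist β, β′ ∈ Δ⁺_nc with β + β′ ∈ Δ. Then there exists an invariant complex structure Ψ ⊆ Δ_nc such that for every β ∈ Δ⁺_nc ∩ (−Ψ) there exists α ∈ Δ⁺_c with ⟨β, α⟩ > 0. -/

import Mathlib

open RealInnerProductSpace

/-- `Ψ ⊆ Δ_nc` is an *invariant complex structure* for the graded root system
`Δ = Δ_c ⊔ Δ_nc` if `Δ_nc = Ψ ⊔ (-Ψ)`, `(Ψ + Ψ) ∩ Δ = ∅`, and `Ψ` is stable under adding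
compact roots (when the sum is a root). -/
def IsInvariantComplexStructure {V : Type*} [AddCommGroup V]
    (Δ Δc Δnc Ψ : Finset V) : Prop :=
  Ψ ⊆ Δnc ∧
  (∀ β ∈ Δnc, β ∈ Ψ ∨ -β ∈ Ψ) ∧
  (∀ β ∈ Ψ, -β ∉ Ψ) ∧
  (∀ β ∈ Ψ, ∀ β' ∈ Ψ, β + β' ∉ Δ) ∧
  (∀ α ∈ Δc, ∀ ψ ∈ Ψ, α + ψ ∈ Δ → α + ψ ∈ Ψ)


namespace ICSP

variable {V : Type*} [NormedAddCommGroup V] [InnerProductSpace ℝ V]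

lemma ips {x : V} (hx : x ≠ 0) : (0:ℝ) < ⟪x, x⟫ := by
  have h := real_inner_self_eq_norm_mul_norm x
  have : 0 < ‖x‖ := norm_pos_iff.mpr hx
  nlinarith

section basic

variable (Δ : Finset V)
variable (hne : ∀ α ∈ Δ, α ≠ 0)
variable (hcrys : ∀ α ∈ Δ, ∀ β ∈ Δ, ∃ k : ℤ, 2 * ⟪β, α⟫ / ⟪α, α⟫ = (k : ℝ))
variable (hrefl : ∀ α ∈ Δ, ∀ β ∈ Δ, β - (2 * ⟪β, α⟫ / ⟪α, α⟫) • α ∈ Δ)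
variable (hred : ∀ α ∈ Δ, ∀ t : ℝ, t • α ∈ Δ → t • α = α ∨ t • α = -α)

include hne hrefl in
lemma neg_mem {y : V} (hy : y ∈ Δ) : -y ∈ Δ := by
  have h := hrefl y hy y hy
  have hyy : ⟪y, y⟫ ≠ 0 := ne_of_gt (ips (hne y hy))
  have heq : 2 * ⟪y, y⟫ / ⟪y, y⟫ = (2:ℝ) := by field_simp
  rw [heq] at h
  have h2 : y - (2:ℝ) • y = -y := by rw [two_smul]; abel
  rwa [h2] at h

include hne hcrys hrefl hred in
lemma key_add {x y : V} (hx : x ∈ Δ) (hy : y ∈ Δ) (hxy : ⟪x, y⟫ < 0) (hne2 : x ≠ -y) :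
    x + y ∈ Δ := by
  have hxx : (0:ℝ) < ⟪x, x⟫ := ips (hne x hx)
  have hyy : (0:ℝ) < ⟪y, y⟫ := ips (hne y hy)
  obtain ⟨m, hm⟩ := hcrys x hx y hy   -- 2⟪y,x⟫/⟪x,x⟫ = m
  obtain ⟨m', hm'⟩ := hcrys y hy x hx -- 2⟪x,y⟫/⟪y,y⟫ = m'
  have hyx : ⟪y, x⟫ = ⟪x, y⟫ := real_inner_comm x y
  -- x, y are not proportional
  have hnotprop : ∀ t : ℝ, y ≠ t • x := by
    intro t ht
    rcases hred x hx t (ht ▸ hy) with h1 | h1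
    · rw [← ht] at h1; subst h1; exact absurd hxy (by simpa using hxx.le)
    · rw [← ht] at h1; subst h1; exact hne2 (by simp)
  -- strict Cauchy-Schwarz
  have hcs : ⟪x, y⟫ * ⟪x, y⟫ < ⟪x, x⟫ * ⟪y, y⟫ := by
    rcases lt_or_eq_of_le (real_inner_mul_inner_self_le x y) with h | h
    · exact h
    · exfalso
      set r := ⟪x, y⟫ / ⟪x, x⟫ with hr
      have hw : y - r • x = 0 := by
        have hinner : ⟪y - r • x, y - r • x⟫ = 0 := by
          rw [inner_sub_left, inner_sub_right, inner_sub_right, real_inner_smul_left,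
            real_inner_smul_left, real_inner_smul_right, real_inner_smul_right]
          rw [hr, hyx]
          field_simp
          nlinarith [h, hxx, hyy]
        exact inner_self_eq_zero.1 hinner
      exact hnotprop r (by rw [sub_eq_zero] at hw; exact hw)
  have hmneg : m ≤ -1 := by
    have h0 : (m:ℝ) < 0 := by
      rw [← hm, hyx]; exact div_neg_of_neg_of_pos (by linarith) hxx
    have : m < 0 := by exact_mod_cast h0
    omega
  have hm'neg : m' ≤ -1 := by
    have h0 : (m':ℝ) < 0 := by
      rw [← hm']; exact div_neg_of_neg_of_pos (by linarith) hyy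
    have : m' < 0 := by exact_mod_cast h0
    omega
  have hprod : (m : ℝ) * m' < 4 := by
    rw [← hm, ← hm', hyx, div_mul_div_comm]
    rw [div_lt_iff₀ (by positivity)]
    nlinarith [hcs]
  have hprodZ : m * m' ≤ 3 := by
    have : (m * m' : ℤ) < 4 := by exact_mod_cast (by push_cast; exact hprod : ((m*m' : ℤ):ℝ) < 4)
    omega
  have hcase : m = -1 ∨ m' = -1 := by
    by_contra hcon
    push_neg at hcon
    have h1 : m ≤ -2 := by omega
    have h2 : m' ≤ -2 := by omega
    nlinarith
  rcases hcase with h | h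
  · have := hrefl x hx y hy
    rw [hm, h] at this
    push_cast at this
    rw [neg_one_smul, sub_neg_eq_add] at this
    rwa [add_comm]
  · have := hrefl y hy x hx
    rw [hm', h] at this
    push_cast at this
    rw [neg_one_smul, sub_neg_eq_add] at this
    exact this

include hne hcrys hrefl hred in
lemma pos_sub {x y : V} (hx : x ∈ Δ) (hy : y ∈ Δ) (hxy : 0 < ⟪x, y⟫) (hne2 : x ≠ y) :
    x - y ∈ Δ := by
  have h := key_add Δ hne hcrys hrefl hred hx (neg_mem Δ hne hrefl hy)
    (by rw [inner_neg_right]; linarith) (by simpa using hne2)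
  simpa [sub_eq_add_neg] using h

end basic

end ICSP

namespace ICSP

variable {V : Type*} [NormedAddCommGroup V] [InnerProductSpace ℝ V]

section strings

variable (Δ : Finset V)
variable (hne : ∀ α ∈ Δ, α ≠ 0)
variable (hcrys : ∀ α ∈ Δ, ∀ β ∈ Δ, ∃ k : ℤ, 2 * ⟪β, α⟫ / ⟪α, α⟫ = (k : ℝ))
variable (hrefl : ∀ α ∈ Δ, ∀ β ∈ Δ, β - (2 * ⟪β, α⟫ / ⟪α, α⟫) • α ∈ Δ)
variable (hred : ∀ α ∈ Δ, ∀ t : ℝ, t • α ∈ Δ → t • α = α ∨ t • α = -α)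

include hne hcrys hrefl hred in
lemma string_up {x α : V} (hx : x ∈ Δ) (hα : α ∈ Δ)
    (hnp : ∀ t : ℝ, x ≠ t • α) (hle : ⟪x, α⟫ ≤ 0) :
    ∃ k : ℕ, 2 * ⟪x, α⟫ / ⟪α, α⟫ = -(k:ℝ) ∧ k ≤ 3 ∧
      ∀ j : ℕ, j ≤ k → x + (j:ℝ) • α ∈ Δ := by
  have hαα : (0:ℝ) < ⟪α, α⟫ := ips (hne α hα)
  have hxx : (0:ℝ) < ⟪x, x⟫ := ips (hne x hx)
  obtain ⟨m, hm⟩ := hcrys α hα x hx   -- 2⟪x,α⟫/⟪α,α⟫ = m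
  rcases eq_or_lt_of_le hle with h0 | hlt
  · refine ⟨0, by simp [h0], by norm_num, ?_⟩
    intro j hj
    interval_cases j
    simpa using hx
  · -- strictly negative case
    have hmneg : m ≤ -1 := by
      have h0 : (m:ℝ) < 0 := by
        rw [← hm]; exact div_neg_of_neg_of_pos (by linarith) hαα
      have : m < 0 := by exact_mod_cast h0
      omega
    obtain ⟨m', hm'⟩ := hcrys x hx α hα  -- 2⟪α,x⟫/⟪x,x⟫ = m'
    have hax : ⟪α, x⟫ = ⟪x, α⟫ := real_inner_comm x α
    have hm'neg : m' ≤ -1 := by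
      have h0 : (m':ℝ) < 0 := by
        rw [← hm', hax]; exact div_neg_of_neg_of_pos (by linarith) hxx
      have : m' < 0 := by exact_mod_cast h0
      omega
    have hcs : ⟪x, α⟫ * ⟪x, α⟫ < ⟪x, x⟫ * ⟪α, α⟫ := by
      rcases lt_or_eq_of_le (real_inner_mul_inner_self_le x α) with h | h
      · exact h
      · exfalso
        set r := ⟪x, α⟫ / ⟪α, α⟫ with hr
        have hw : x - r • α = 0 := by
          have hinner : ⟪x - r • α, x - r • α⟫ = 0 := by
            rw [inner_sub_left, inner_sub_right, inner_sub_right, real_inner_smul_left,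
              real_inner_smul_left, real_inner_smul_right, real_inner_smul_right]
            rw [hr, hax]
            field_simp
            nlinarith [h, hxx, hαα]
          exact inner_self_eq_zero.1 hinner
        exact hnp r (by rw [sub_eq_zero] at hw; exact hw)
    have hprodZ : m * m' ≤ 3 := by
      have hprod : (m : ℝ) * m' < 4 := by
        rw [← hm, ← hm', hax, div_mul_div_comm]
        rw [div_lt_iff₀ (by positivity)]
        nlinarith [hcs]
      have : (m * m' : ℤ) < 4 := by
        exact_mod_cast (by push_cast; exact hprod : ((m*m' : ℤ):ℝ) < 4)
      omega
    have hmge : -3 ≤ m := by nlinarith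
    -- the endpoint via reflection
    have hend : x + (-(m:ℝ)) • α ∈ Δ := by
      have := hrefl α hα x hx
      rw [hm] at this
      have he : x - (m:ℝ) • α = x + (-(m:ℝ)) • α := by
        rw [neg_smul, sub_eq_add_neg]
      rwa [he] at this
    have h1 : x + (1:ℝ) • α ∈ Δ := by
      have := key_add Δ hne hcrys hrefl hred hx hα hlt
        (by intro h; exact hnp (-1) (by rw [h]; simp))
      simpa using this
    refine ⟨(-m).toNat, ?_, by omega, ?_⟩
    · have hz : (((-m).toNat:ℕ):ℤ) = -m := Int.toNat_of_nonneg (by omega)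
      rw [hm, show (((-m).toNat:ℕ):ℝ) = ((-m:ℤ):ℝ) from by
        exact_mod_cast congrArg (fun z : ℤ => (z:ℝ)) hz]
      push_cast
      ring
    intro j hj
    have hjm : (j:ℤ) ≤ -m := by omega
    have hj3 : j ≤ 3 := by omega
    interval_cases m
    · -- m = -3
      have h2 : x + (2:ℝ) • α ∈ Δ := by
        have hxa : ⟪x + (1:ℝ)•α, α⟫ < 0 := by
          rw [inner_add_left, real_inner_smul_left]
          have : 2 * ⟪x, α⟫ = -3 * ⟪α, α⟫ := by
            have := hm
            field_simp at this
            push_cast at this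
            linarith
          linarith
        have hne3 : x + (1:ℝ)•α ≠ -α := by
          intro h
          apply hnp (-2)
          have hx2 : x = -α - (1:ℝ)•α := by rw [← h]; abel
          rw [hx2]; module
        have := key_add Δ hne hcrys hrefl hred h1 hα hxa hne3
        have he : x + (1:ℝ)•α + α = x + (2:ℝ)•α := by module
        rwa [he] at this
      have h3 : x + (3:ℝ) • α ∈ Δ := by
        have he : x + -((-3:ℤ):ℝ) • α = x + (3:ℝ) • α := by norm_num
        rwa [he] at hend
      interval_cases j
      · simpa using hx
      · simpa using h1
      · have : ((2:ℕ):ℝ) = (2:ℝ) := by norm_num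
        rwa [this]
      · have : ((3:ℕ):ℝ) = (3:ℝ) := by norm_num
        rwa [this]
    · -- m = -2
      have h2 : x + (2:ℝ) • α ∈ Δ := by
        have he : x + -((-2:ℤ):ℝ) • α = x + (2:ℝ) • α := by norm_num
        rwa [he] at hend
      interval_cases j
      · simpa using hx
      · simpa using h1
      · have : ((2:ℕ):ℝ) = (2:ℝ) := by norm_num
        rwa [this]
      · omega
    · -- m = -1
      interval_cases j
      · simpa using hx
      · simpa using h1
      · omega
      · omega

end strings

end ICSP

namespace ICSP

variable {V : Type*} [NormedAddCommGroup V] [InnerProductSpace ℝ V]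

section transfer

variable (Δ : Finset V)
variable (hne : ∀ α ∈ Δ, α ≠ 0)
variable (hcrys : ∀ α ∈ Δ, ∀ β ∈ Δ, ∃ k : ℤ, 2 * ⟪β, α⟫ / ⟪α, α⟫ = (k : ℝ))
variable (hrefl : ∀ α ∈ Δ, ∀ β ∈ Δ, β - (2 * ⟪β, α⟫ / ⟪α, α⟫) • α ∈ Δ)
variable (hred : ∀ α ∈ Δ, ∀ t : ℝ, t • α ∈ Δ → t • α = α ∨ t • α = -α)

include hne hcrys hrefl hred in
lemma P_reflect (P : Finset V) (hPΔ : P ⊆ Δ)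
    (hPsum : ∀ x ∈ P, ∀ y ∈ P, x + y ∈ Δ → x + y ∈ P) (hPneg : ∀ x ∈ P, -x ∉ P)
    {γ α : V} (hγ : γ ∈ P) (hα : α ∈ P) (hle : ⟪γ, α⟫ ≤ 0) :
    γ - (2 * ⟪γ, α⟫ / ⟪α, α⟫) • α ∈ P := by
  have hnp : ∀ t : ℝ, γ ≠ t • α := by
    intro t ht
    rcases hred α (hPΔ hα) t (ht ▸ hPΔ hγ) with h1 | h1
    · rw [← ht] at h1; subst h1
      exact absurd hle (by simpa using hne γ (hPΔ hγ))
    · rw [← ht] at h1; subst h1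
      exact hPneg α hα (by simpa using hγ)
  obtain ⟨k, hk, hk3, hmem⟩ := string_up Δ hne hcrys hrefl hred (hPΔ hγ) (hPΔ hα) hnp hle
  have step : ∀ j : ℕ, j ≤ k → γ + (j:ℝ) • α ∈ P := by
    intro j
    induction j with
    | zero => intro _; simpa using hγ
    | succ n ih =>
      intro hn
      have h1 : γ + (n:ℝ) • α ∈ P := ih (by omega)
      have h2 : γ + (n:ℝ) • α + α ∈ Δ := by
        have h3 := hmem (n+1) hn
        have he : γ + ((n+1:ℕ):ℝ) • α = γ + (n:ℝ) • α + α := by push_cast; module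
        rwa [he] at h3
      have := hPsum _ h1 α hα h2
      have he2 : γ + (n:ℝ) • α + α = γ + ((n+1:ℕ):ℝ) • α := by push_cast; module
      rwa [he2] at this
  rw [hk, neg_smul, sub_neg_eq_add]
  exact step k le_rfl

include hne hcrys hrefl hred in
lemma rho_pos (P : Finset V) (hPΔ : P ⊆ Δ)
    (hPsum : ∀ x ∈ P, ∀ y ∈ P, x + y ∈ Δ → x + y ∈ P) (hPneg : ∀ x ∈ P, -x ∉ P)
    {α : V} (hα : α ∈ P) : 0 < ⟪α, ∑ γ ∈ P, γ⟫ := by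
  classical
  have hαα : (0:ℝ) < ⟪α, α⟫ := ips (hne α (hPΔ hα))
  set s : V → V := fun γ => γ - (2 * ⟪γ, α⟫ / ⟪α, α⟫) • α with hs
  have hsinner : ∀ γ, ⟪α, s γ⟫ = -⟪α, γ⟫ := by
    intro γ
    rw [hs]
    simp only [inner_sub_right, real_inner_smul_right]
    rw [real_inner_comm γ α]
    field_simp
    ring
  have hsinv : ∀ γ, s (s γ) = γ := by
    intro γ
    rw [hs]
    simp only
    have h1 : ⟪γ - (2 * ⟪γ, α⟫ / ⟪α, α⟫) • α, α⟫ = -⟪γ, α⟫ := by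
      rw [inner_sub_left, real_inner_smul_left]
      field_simp
      ring
    rw [h1]
    have : 2 * -⟪γ, α⟫ / ⟪α, α⟫ = -(2 * ⟪γ, α⟫ / ⟪α, α⟫) := by ring
    rw [this, neg_smul, sub_neg_eq_add]
    abel
  rw [inner_sum]
  rw [← Finset.sum_filter_add_sum_filter_not P (fun γ => s γ ∈ P)]
  have hzero : ∑ γ ∈ P.filter (fun γ => s γ ∈ P), ⟪α, γ⟫ = 0 := by
    set P₁ := P.filter (fun γ => s γ ∈ P) with hP₁
    have hmap : ∀ γ ∈ P₁, s γ ∈ P₁ := by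
      intro γ hγ
      rw [hP₁, Finset.mem_filter] at hγ ⊢
      exact ⟨hγ.2, by rw [hsinv]; exact hγ.1⟩
    have hrw : ∑ γ ∈ P₁, ⟪α, γ⟫ = ∑ γ ∈ P₁, ⟪α, s γ⟫ := by
      refine (Finset.sum_nbij' (i := s) (j := s) hmap hmap
        (fun γ _ => hsinv γ) (fun γ _ => hsinv γ) ?_).symm
      intro γ hγ
      rfl
    have : ∑ γ ∈ P₁, ⟪α, γ⟫ = -∑ γ ∈ P₁, ⟪α, γ⟫ := by
      nth_rewrite 1 [hrw]
      rw [← Finset.sum_neg_distrib]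
      exact Finset.sum_congr rfl (fun γ _ => hsinner γ)
    linarith
  rw [hzero, zero_add]
  have hTpos : ∀ γ ∈ P.filter (fun γ => ¬ s γ ∈ P), 0 < ⟪α, γ⟫ := by
    intro γ hγ
    rw [Finset.mem_filter] at hγ
    by_contra hcon
    push_neg at hcon
    rw [real_inner_comm] at hcon
    exact hγ.2 (P_reflect Δ hne hcrys hrefl hred P hPΔ hPsum hPneg hγ.1 hα hcon)
  have hαT : α ∈ P.filter (fun γ => ¬ s γ ∈ P) := by
    rw [Finset.mem_filter]
    refine ⟨hα, ?_⟩
    have : s α = -α := by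
      rw [hs]
      simp only
      rw [show 2 * ⟪α, α⟫ / ⟪α, α⟫ = (2:ℝ) from by field_simp, two_smul]
      abel
    rw [this]
    exact hPneg α hα
  exact Finset.sum_pos hTpos ⟨α, hαT⟩

end transfer

end ICSP

namespace ICSP

variable {V : Type*} [NormedAddCommGroup V] [InnerProductSpace ℝ V]

section ics

variable (Δ Δc Δnc Ψ : Finset V)
variable (hne : ∀ α ∈ Δ, α ≠ 0)
variable (hcrys : ∀ α ∈ Δ, ∀ β ∈ Δ, ∃ k : ℤ, 2 * ⟪β, α⟫ / ⟪α, α⟫ = (k : ℝ))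
variable (hrefl : ∀ α ∈ Δ, ∀ β ∈ Δ, β - (2 * ⟪β, α⟫ / ⟪α, α⟫) • α ∈ Δ)
variable (hred : ∀ α ∈ Δ, ∀ t : ℝ, t • α ∈ Δ → t • α = α ∨ t • α = -α)
variable (hcle : Δc ⊆ Δ) (hnle : Δnc ⊆ Δ)
variable (hdisj : ∀ α ∈ Δc, α ∉ Δnc) (hcneg : ∀ α ∈ Δc, -α ∈ Δc)
variable (hΨn : Ψ ⊆ Δnc)
variable (hΨneg : ∀ β ∈ Ψ, -β ∉ Ψ)
variable (hΨsum : ∀ β ∈ Ψ, ∀ β' ∈ Ψ, β + β' ∉ Δ)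
variable (hΨcl : ∀ α ∈ Δc, ∀ ψ ∈ Ψ, α + ψ ∈ Δ → α + ψ ∈ Ψ)

-- two roots of Ψ pair nonnegatively
include hne hcrys hrefl hred hnle hΨn hΨneg hΨsum in
lemma psi_pair {ψ ψ' : V} (hψ : ψ ∈ Ψ) (hψ' : ψ' ∈ Ψ) : 0 ≤ ⟪ψ, ψ'⟫ := by
  by_contra hcon
  push_neg at hcon
  have hne2 : ψ ≠ -ψ' := by
    intro h
    exact hΨneg ψ' hψ' (h ▸ hψ)
  exact hΨsum ψ hψ ψ' hψ'
    (key_add Δ hne hcrys hrefl hred (hnle (hΨn hψ)) (hnle (hΨn hψ')) hcon hne2)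

include hne hcrys hrefl hred hcle hnle hdisj hcneg hΨn hΨcl in
lemma psi_reflect {ψ α : V} (hψ : ψ ∈ Ψ) (hα : α ∈ Δc) :
    ψ - (2 * ⟪ψ, α⟫ / ⟪α, α⟫) • α ∈ Ψ := by
  have main : ∀ γ, γ ∈ Δc → ⟪ψ, γ⟫ ≤ 0 → ψ - (2 * ⟪ψ, γ⟫ / ⟪γ, γ⟫) • γ ∈ Ψ := by
    intro γ hγ hle
    have hnp : ∀ t : ℝ, ψ ≠ t • γ := by
      intro t ht
      rcases hred γ (hcle hγ) t (ht ▸ hnle (hΨn hψ)) with h1 | h1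
      · rw [← ht] at h1; exact hdisj γ hγ (h1 ▸ hΨn hψ)
      · rw [← ht] at h1; exact hdisj (-γ) (hcneg γ hγ) (h1 ▸ hΨn hψ)
    obtain ⟨k, hk, hk3, hmem⟩ :=
      string_up Δ hne hcrys hrefl hred (hnle (hΨn hψ)) (hcle hγ) hnp hle
    have step : ∀ j : ℕ, j ≤ k → ψ + (j:ℝ) • γ ∈ Ψ := by
      intro j
      induction j with
      | zero => intro _; simpa using hψ
      | succ n ih =>
        intro hn
        have h1 : ψ + (n:ℝ) • γ ∈ Ψ := ih (by omega)
        have h2 : γ + (ψ + (n:ℝ) • γ) ∈ Δ := by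
          have h3 := hmem (n+1) hn
          have he : ψ + ((n+1:ℕ):ℝ) • γ = γ + (ψ + (n:ℝ) • γ) := by push_cast; module
          rwa [he] at h3
        have := hΨcl γ hγ _ h1 h2
        have he2 : γ + (ψ + (n:ℝ) • γ) = ψ + ((n+1:ℕ):ℝ) • γ := by push_cast; module
        rwa [he2] at this
    rw [hk, neg_smul, sub_neg_eq_add]
    exact step k le_rfl
  rcases le_or_gt ⟪ψ, α⟫ 0 with h | h
  · exact main α hα h
  · have hres := main (-α) (hcneg α hα) (by rw [inner_neg_right]; linarith)
    have he : ψ - (2 * ⟪ψ, -α⟫ / ⟪-α, -α⟫) • (-α) = ψ - (2 * ⟪ψ, α⟫ / ⟪α, α⟫) • α := by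
      rw [inner_neg_right, inner_neg_neg]
      rw [show 2 * -⟪ψ, α⟫ / ⟪α, α⟫ = -(2 * ⟪ψ, α⟫ / ⟪α, α⟫) from by ring]
      rw [neg_smul, smul_neg, neg_neg]
    rwa [he] at hres

-- the central element z₀
include hne hcrys hrefl hred hcle hnle hdisj hcneg hΨn hΨcl in
lemma z0_orth {α : V} (hα : α ∈ Δc) : ⟪α, ∑ ψ ∈ Ψ, ψ⟫ = 0 := by
  classical
  have hαα : (0:ℝ) < ⟪α, α⟫ := ips (hne α (hcle hα))
  set s : V → V := fun γ => γ - (2 * ⟪γ, α⟫ / ⟪α, α⟫) • α with hs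
  have hsinv : ∀ γ, s (s γ) = γ := by
    intro γ
    rw [hs]
    simp only
    have h1 : ⟪γ - (2 * ⟪γ, α⟫ / ⟪α, α⟫) • α, α⟫ = -⟪γ, α⟫ := by
      rw [inner_sub_left, real_inner_smul_left]
      field_simp
      ring
    rw [h1]
    rw [show 2 * -⟪γ, α⟫ / ⟪α, α⟫ = -(2 * ⟪γ, α⟫ / ⟪α, α⟫) from by ring]
    rw [neg_smul, sub_neg_eq_add]
    abel
  have hmap : ∀ ψ ∈ Ψ, s ψ ∈ Ψ :=
    fun ψ hψ => psi_reflect Δ Δc Δnc Ψ hne hcrys hrefl hred hcle hnle hdisj hcneg hΨn hΨcl hψ hα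
  -- sum is s-invariant
  have hsum : ∑ ψ ∈ Ψ, s ψ = ∑ ψ ∈ Ψ, ψ := by
    refine Finset.sum_nbij' (i := s) (j := s) hmap hmap
      (fun γ _ => hsinv γ) (fun γ _ => hsinv γ) ?_
    intro γ hγ
    rfl
  have hexp : ∑ ψ ∈ Ψ, s ψ = (∑ ψ ∈ Ψ, ψ) - (2 * ⟪∑ ψ ∈ Ψ, ψ, α⟫ / ⟪α, α⟫) • α := by
    rw [hs]
    rw [Finset.sum_sub_distrib]
    congr 1
    rw [← Finset.sum_smul]
    congr 1
    rw [sum_inner, Finset.mul_sum, Finset.sum_div]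
  rw [hsum] at hexp
  have h0 : (2 * ⟪∑ ψ ∈ Ψ, ψ, α⟫ / ⟪α, α⟫) • α = 0 := sub_eq_self.1 hexp.symm
  rcases smul_eq_zero.1 h0 with h | h
  · have : ⟪∑ ψ ∈ Ψ, ψ, α⟫ = 0 := by
      field_simp at h
      linarith
    rw [real_inner_comm]
    exact this
  · exact absurd h (hne α (hcle hα))

end ics

end ICSP

namespace ICSP

variable {V : Type*} [NormedAddCommGroup V] [InnerProductSpace ℝ V]

/-- connectivity in the root system -/
def Conn (Δ : Finset V) : V → V → Prop :=
  Relation.ReflTransGen (fun a b => a ∈ Δ ∧ b ∈ Δ ∧ ⟪a, b⟫ ≠ 0)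

lemma conn_symm {Δ : Finset V} {x y : V} (h : Conn Δ x y) : Conn Δ y x := by
  refine (@Relation.ReflTransGen.symmetric _ _ ⟨?_⟩).symm _ _ h
  intro a b hab
  exact ⟨hab.2.1, hab.1, by rw [real_inner_comm]; exact hab.2.2⟩

lemma conn_single {Δ : Finset V} {x y : V} (hx : x ∈ Δ) (hy : y ∈ Δ) (h : ⟪x, y⟫ ≠ 0) :
    Conn Δ x y :=
  Relation.ReflTransGen.single ⟨hx, hy, h⟩

lemma conn_neg_right {Δ : Finset V} (hneg : ∀ y ∈ Δ, -y ∈ Δ) {x y : V} (h : Conn Δ x y)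
    (hxy : x ≠ y) : Conn Δ x (-y) := by
  rcases Relation.ReflTransGen.cases_tail h with h1 | ⟨c, hc, hcy⟩
  · exact absurd h1.symm hxy
  · exact hc.tail ⟨hcy.1, hneg y hcy.2.1, by rw [inner_neg_right]; simpa using hcy.2.2⟩

lemma conn_trans {Δ : Finset V} {x y z : V} (h1 : Conn Δ x y) (h2 : Conn Δ y z) :
    Conn Δ x z := h1.trans h2

section ics2

variable (Δ Δc Δnc Ψ : Finset V)
variable (hne : ∀ α ∈ Δ, α ≠ 0)
variable (hcrys : ∀ α ∈ Δ, ∀ β ∈ Δ, ∃ k : ℤ, 2 * ⟪β, α⟫ / ⟪α, α⟫ = (k : ℝ))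
variable (hrefl : ∀ α ∈ Δ, ∀ β ∈ Δ, β - (2 * ⟪β, α⟫ / ⟪α, α⟫) • α ∈ Δ)
variable (hred : ∀ α ∈ Δ, ∀ t : ℝ, t • α ∈ Δ → t • α = α ∨ t • α = -α)
variable (hcle : Δc ⊆ Δ) (hnle : Δnc ⊆ Δ)
variable (hdisj : ∀ α ∈ Δc, α ∉ Δnc) (hcneg : ∀ α ∈ Δc, -α ∈ Δc)
variable (hncneg : ∀ α ∈ Δnc, -α ∈ Δnc)
variable (hnn : ∀ α ∈ Δnc, ∀ α' ∈ Δnc, α + α' ∈ Δ → α + α' ∈ Δc)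
variable (hΨn : Ψ ⊆ Δnc)
variable (hΨneg : ∀ β ∈ Ψ, -β ∉ Ψ)
variable (hΨsum : ∀ β ∈ Ψ, ∀ β' ∈ Ψ, β + β' ∉ Δ)
variable (hΨcl : ∀ α ∈ Δc, ∀ ψ ∈ Ψ, α + ψ ∈ Δ → α + ψ ∈ Ψ)

include hne hcrys hrefl hred hnle hncneg hnn hΨn hΨneg hΨsum in
lemma psi_diff {ψ ψ' : V} (hψ : ψ ∈ Ψ) (hψ' : ψ' ∈ Ψ) (h : ⟪ψ, ψ'⟫ ≠ 0) :
    ψ - ψ' ∈ Submodule.span ℝ (↑Δc : Set V) ∧ (ψ = ψ' ∨ ψ - ψ' ∈ Δc) := by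
  rcases eq_or_ne ψ ψ' with he | hne2
  · exact ⟨by rw [he, sub_self]; exact Submodule.zero_mem _, Or.inl he⟩
  · have hpos : 0 < ⟪ψ, ψ'⟫ :=
      lt_of_le_of_ne (psi_pair Δ Δnc Ψ hne hcrys hrefl hred hnle hΨn hΨneg hΨsum hψ hψ')
        (Ne.symm h)
    have hsub : ψ - ψ' ∈ Δ :=
      pos_sub Δ hne hcrys hrefl hred (hnle (hΨn hψ)) (hnle (hΨn hψ')) hpos hne2
    have hc : ψ - ψ' ∈ Δc := by
      have := hnn ψ (hΨn hψ) (-ψ') (hncneg ψ' (hΨn hψ')) (by rwa [← sub_eq_add_neg])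
      rwa [← sub_eq_add_neg] at this
    exact ⟨Submodule.subset_span hc, Or.inr hc⟩

include hne hcrys hrefl hred hcle hnle hdisj hcneg hncneg hnn hΨn hΨneg hΨsum hΨcl in
lemma lemmaX (hcov : ∀ α ∈ Δ, α ∈ Δc ∨ α ∈ Δnc) (hΨcov : ∀ β ∈ Δnc, β ∈ Ψ ∨ -β ∈ Ψ)
    {ψ ψ' : V} (hψ : ψ ∈ Ψ) (hψ' : ψ' ∈ Ψ) (hconn : Conn Δ ψ ψ') :
    ψ' - ψ ∈ Submodule.span ℝ (↑Δc : Set V) := by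
  set K := Submodule.span ℝ (↑Δc : Set V) with hK
  have hinv : ∀ γ, Conn Δ ψ γ →
      ∃ ψ₂ ∈ Ψ, ψ₂ - ψ ∈ K ∧ (γ = ψ₂ ∨ γ = -ψ₂ ∨ ⟪γ, ψ₂⟫ ≠ 0) := by
    intro γ hγ
    induction hγ with
    | refl => exact ⟨ψ, hψ, by simp, Or.inl rfl⟩
    | tail hab hbc ih =>
      rename_i b c
      obtain ⟨hbΔ, hcΔ, hbc0⟩ := hbc
      obtain ⟨ψ₂, hψ₂, hψ₂K, hrel⟩ := ih
      rcases eq_or_ne ⟪c, ψ₂⟫ 0 with hczero | hcne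
      swap
      · exact ⟨ψ₂, hψ₂, hψ₂K, Or.inr (Or.inr hcne)⟩
      -- c ⊥ ψ₂, so b relates to ψ₂ via nonzero inner product
      have hbψ₂ : ⟪b, ψ₂⟫ ≠ 0 := by
        rcases hrel with h | h | h
        · exfalso
          apply hbc0
          rw [h]
          rwa [real_inner_comm] at hczero
        · exfalso
          apply hbc0
          rw [h, inner_neg_left]
          rw [real_inner_comm] at hczero
          simp [hczero]
        · exact h
      rcases hcov b hbΔ with hbcomp | hbnc
      · -- b compact : move ψ₂ one step in direction of b
        have hstep : ∀ α ∈ Δc, ⟪ψ₂, α⟫ < 0 → ⟪c, α⟫ ≠ 0 →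
            ∃ ψ₃ ∈ Ψ, ψ₃ - ψ ∈ K ∧ (c = ψ₃ ∨ c = -ψ₃ ∨ ⟪c, ψ₃⟫ ≠ 0) := by
          intro α hα hneg hcα
          have hne2 : ψ₂ ≠ -α := by
            intro h
            exact hdisj (-α) (hcneg α hα) (h ▸ hΨn hψ₂)
          have hsum : ψ₂ + α ∈ Δ :=
            key_add Δ hne hcrys hrefl hred (hnle (hΨn hψ₂)) (hcle hα) hneg hne2
          have hmem : α + ψ₂ ∈ Ψ := hΨcl α hα ψ₂ hψ₂ (by rwa [add_comm])
          refine ⟨α + ψ₂, hmem, ?_, Or.inr (Or.inr ?_)⟩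
          · have : α + ψ₂ - ψ = (ψ₂ - ψ) + α := by abel
            rw [this]
            exact Submodule.add_mem _ hψ₂K (Submodule.subset_span hα)
          · rw [inner_add_right, hczero, add_zero]
            exact hcα
        have hψ₂b : ⟪ψ₂, b⟫ ≠ 0 := by rwa [real_inner_comm] at hbψ₂
        rcases lt_or_gt_of_ne hψ₂b with h | h
        · exact hstep b hbcomp h (by rwa [real_inner_comm] at hbc0)
        · refine hstep (-b) (hcneg b hbcomp) (by rw [inner_neg_right]; linarith) ?_
          rw [inner_neg_right, ne_eq, neg_eq_zero]
          rwa [real_inner_comm] at hbc0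
      · -- b noncompact : replace ψ₂ by ±b
        have hbne : b ≠ ψ₂ ∧ b ≠ -ψ₂ := by
          constructor
          · intro h
            apply hbc0
            rw [h]
            rwa [real_inner_comm] at hczero
          · intro h
            apply hbc0
            rw [h, inner_neg_left]
            rw [real_inner_comm] at hczero
            simp [hczero]
        rcases hΨcov b hbnc with hδ | hδ
        · -- b ∈ Ψ
          have hdiff := psi_diff Δ Δc Δnc Ψ hne hcrys hrefl hred hnle hncneg hnn hΨn hΨneg
            hΨsum hδ hψ₂ hbψ₂
          refine ⟨b, hδ, ?_, Or.inr (Or.inr (by rwa [real_inner_comm] at hbc0))⟩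
          have : b - ψ = (b - ψ₂) + (ψ₂ - ψ) := by abel
          rw [this]
          exact Submodule.add_mem _ hdiff.1 hψ₂K
        · -- -b ∈ Ψ
          have hnbψ₂ : ⟪-b, ψ₂⟫ ≠ 0 := by
            rw [inner_neg_left, ne_eq, neg_eq_zero]
            exact hbψ₂
          have hdiff := psi_diff Δ Δc Δnc Ψ hne hcrys hrefl hred hnle hncneg hnn hΨn hΨneg
            hΨsum hδ hψ₂ hnbψ₂
          refine ⟨-b, hδ, ?_, Or.inr (Or.inr ?_)⟩
          · have : -b - ψ = (-b - ψ₂) + (ψ₂ - ψ) := by abel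
            rw [this]
            exact Submodule.add_mem _ hdiff.1 hψ₂K
          · rw [inner_neg_right, ne_eq, neg_eq_zero]
            rwa [real_inner_comm] at hbc0
  obtain ⟨ψ₂, hψ₂, hψ₂K, hrel⟩ := hinv ψ' hconn
  rcases hrel with h | h | h
  · rwa [h]
  · exfalso
    exact hΨneg ψ₂ hψ₂ (h ▸ hψ')
  · have hdiff := psi_diff Δ Δc Δnc Ψ hne hcrys hrefl hred hnle hncneg hnn hΨn hΨneg
      hΨsum hψ' hψ₂ h
    have : ψ' - ψ = (ψ' - ψ₂) + (ψ₂ - ψ) := by abel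
    rw [this]
    exact Submodule.add_mem _ hdiff.1 hψ₂K

end ics2

end ICSP

namespace ICSP

variable {V : Type*} [NormedAddCommGroup V] [InnerProductSpace ℝ V]

section domcone

variable (Δ : Finset V)
variable (hne : ∀ α ∈ Δ, α ≠ 0)
variable (hcrys : ∀ α ∈ Δ, ∀ β ∈ Δ, ∃ k : ℤ, 2 * ⟪β, α⟫ / ⟪α, α⟫ = (k : ℝ))
variable (hrefl : ∀ α ∈ Δ, ∀ β ∈ Δ, β - (2 * ⟪β, α⟫ / ⟪α, α⟫) • α ∈ Δ)
variable (hred : ∀ α ∈ Δ, ∀ t : ℝ, t • α ∈ Δ → t • α = α ∨ t • α = -α)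

include hne hcrys hrefl hred in
lemma dom_cone (P : Finset V) (hPΔ : P ⊆ Δ)
    (hPsum : ∀ x ∈ P, ∀ y ∈ P, x + y ∈ Δ → x + y ∈ P) (hPneg : ∀ x ∈ P, -x ∉ P)
    (hPdiff : ∀ a ∈ P, ∀ b ∈ P, a - b ∈ Δ → (a - b ∈ P ∨ b - a ∈ P))
    {y : V} (hy : y ∈ Submodule.span ℝ (↑P : Set V))
    (hdom : ∀ α ∈ P, 0 ≤ ⟪y, α⟫) :
    ∃ c : V → ℝ, (∀ γ, 0 ≤ c γ) ∧ y = ∑ γ ∈ P, c γ • γ := by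
  classical
  set rP := ∑ γ ∈ P, γ with hrP
  have hrpos : ∀ α ∈ P, 0 < ⟪α, rP⟫ := fun α hα =>
    rho_pos Δ hne hcrys hrefl hred P hPΔ hPsum hPneg hα
  set Ind := P.filter (fun a => ¬ ∃ x ∈ P, ∃ z ∈ P, a = x + z) with hInd
  have hIndP : Ind ⊆ P := Finset.filter_subset _ _
  -- F1 : every element of P lies in the span of the indecomposables
  have F1 : ∀ a ∈ P, a ∈ Submodule.span ℝ (↑Ind : Set V) := by
    have F1aux : ∀ n : ℕ, ∀ a ∈ P,
        (P.filter (fun b => ⟪b, rP⟫ < ⟪a, rP⟫)).card ≤ n →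
        a ∈ Submodule.span ℝ (↑Ind : Set V) := by
      intro n
      induction n with
      | zero =>
        intro a ha hcard
        by_cases haInd : a ∈ Ind
        · exact Submodule.subset_span haInd
        · exfalso
          rw [hInd, Finset.mem_filter, not_and, not_not] at haInd
          obtain ⟨x, hx, z, hz, hxz⟩ := haInd ha
          have hxa : x ∈ P.filter (fun b => ⟪b, rP⟫ < ⟪a, rP⟫) := by
            rw [Finset.mem_filter]
            refine ⟨hx, ?_⟩
            rw [hxz, inner_add_left]
            linarith [hrpos z hz]
          have := Finset.card_pos.2 ⟨x, hxa⟩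
          omega
      | succ n ih =>
        intro a ha hcard
        by_cases haInd : a ∈ Ind
        · exact Submodule.subset_span haInd
        · rw [hInd, Finset.mem_filter, not_and, not_not] at haInd
          obtain ⟨x, hx, z, hz, hxz⟩ := haInd ha
          have hlt : ∀ w ∈ P, ⟪w, rP⟫ < ⟪a, rP⟫ →
              (P.filter (fun b => ⟪b, rP⟫ < ⟪w, rP⟫)).card ≤ n := by
            intro w hw hwa
            have hsub : P.filter (fun b => ⟪b, rP⟫ < ⟪w, rP⟫) ⊆
                P.filter (fun b => ⟪b, rP⟫ < ⟪a, rP⟫) := by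
              intro b hb
              rw [Finset.mem_filter] at hb ⊢
              exact ⟨hb.1, lt_trans hb.2 hwa⟩
            have hwmem : w ∈ P.filter (fun b => ⟪b, rP⟫ < ⟪a, rP⟫) := by
              rw [Finset.mem_filter]; exact ⟨hw, hwa⟩
            have hwnot : w ∉ P.filter (fun b => ⟪b, rP⟫ < ⟪w, rP⟫) := by
              rw [Finset.mem_filter]
              rintro ⟨-, h⟩
              exact lt_irrefl _ h
            have : (P.filter (fun b => ⟪b, rP⟫ < ⟪w, rP⟫)).card <
                (P.filter (fun b => ⟪b, rP⟫ < ⟪a, rP⟫)).card :=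
              Finset.card_lt_card (Finset.ssubset_iff_of_subset hsub |>.2
                ⟨w, hwmem, hwnot⟩)
            omega
          have hxlt : ⟪x, rP⟫ < ⟪a, rP⟫ := by
            rw [hxz, inner_add_left]; linarith [hrpos z hz]
          have hzlt : ⟪z, rP⟫ < ⟪a, rP⟫ := by
            rw [hxz, inner_add_left]; linarith [hrpos x hx]
          rw [hxz]
          exact Submodule.add_mem _ (ih x hx (hlt x hx hxlt)) (ih z hz (hlt z hz hzlt))
    intro a ha
    exact F1aux (P.filter (fun b => ⟪b, rP⟫ < ⟪a, rP⟫)).card a ha le_rfl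
  -- F2 : distinct indecomposables pair nonpositively
  have F2 : ∀ a ∈ Ind, ∀ b ∈ Ind, a ≠ b → ⟪a, b⟫ ≤ 0 := by
    intro a ha b hb hab
    by_contra hcon
    push_neg at hcon
    have hsub : a - b ∈ Δ :=
      pos_sub Δ hne hcrys hrefl hred (hPΔ (hIndP ha)) (hPΔ (hIndP hb)) hcon hab
    rcases hPdiff a (hIndP ha) b (hIndP hb) hsub with h | h
    · rw [hInd, Finset.mem_filter] at ha
      exact ha.2 ⟨b, hIndP hb, a - b, h, by abel⟩
    · rw [hInd, Finset.mem_filter] at hb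
      exact hb.2 ⟨a, hIndP ha, b - a, h, by abel⟩
  -- representation over Ind
  have hyInd : y ∈ Submodule.span ℝ (↑Ind : Set V) := by
    have hPle : Submodule.span ℝ (↑P : Set V) ≤ Submodule.span ℝ (↑Ind : Set V) :=
      Submodule.span_le.2 (fun x hx => F1 x hx)
    exact hPle hy
  obtain ⟨f, -, hf⟩ := Submodule.mem_span_finset.1 hyInd
  set IndM := Ind.filter (fun γ => f γ < 0) with hIndM
  set ym := ∑ γ ∈ IndM, (-(f γ)) • γ with hym
  have hsplit : y + ym = ∑ γ ∈ Ind.filter (fun γ => ¬ f γ < 0), f γ • γ := by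
    rw [← hf, ← Finset.sum_filter_add_sum_filter_not Ind (fun γ => f γ < 0)]
    rw [hym]
    have : ∑ γ ∈ IndM, (-(f γ)) • γ = -∑ γ ∈ IndM, f γ • γ := by
      rw [← Finset.sum_neg_distrib]
      exact Finset.sum_congr rfl (fun γ _ => by rw [neg_smul])
    rw [this, hIndM]
    abel
  have h1 : 0 ≤ ⟪y, ym⟫ := by
    rw [hym, inner_sum]
    refine Finset.sum_nonneg (fun γ hγ => ?_)
    rw [real_inner_smul_right]
    rw [hIndM, Finset.mem_filter] at hγ
    have := hdom γ (hIndP hγ.1)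
    nlinarith [hγ.2]
  have h2 : ⟪y + ym, ym⟫ ≤ 0 := by
    rw [hsplit, hym, sum_inner]
    refine Finset.sum_nonpos (fun α hα => ?_)
    rw [Finset.mem_filter] at hα
    rw [real_inner_smul_left, inner_sum]
    have hsum : ∑ γ ∈ IndM, ⟪α, (-(f γ)) • γ⟫ ≤ 0 := by
      refine Finset.sum_nonpos (fun γ hγ => ?_)
      rw [real_inner_smul_right]
      rw [hIndM, Finset.mem_filter] at hγ
      have hne2 : α ≠ γ := fun h => (h ▸ hα.2) hγ.2
      have hF2 := F2 α hα.1 γ hγ.1 hne2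
      nlinarith [hγ.2]
    have hfα : 0 ≤ f α := le_of_not_gt hα.2
    exact mul_nonpos_of_nonneg_of_nonpos hfα hsum
  have hym0 : ym = 0 := by
    have h3 : ⟪ym, ym⟫ ≤ 0 := by
      have h5 : ⟪y + ym, ym⟫ = ⟪y, ym⟫ + ⟪ym, ym⟫ := inner_add_left _ _ _
      linarith [h1, h2]
    exact inner_self_eq_zero.1 (le_antisymm h3 real_inner_self_nonneg)
  -- final representation
  refine ⟨fun γ => if γ ∈ Ind ∧ ¬ f γ < 0 then f γ else 0, ?_, ?_⟩
  · intro γ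
    dsimp only
    by_cases h : γ ∈ Ind ∧ ¬ f γ < 0
    · rw [if_pos h]; exact le_of_not_gt h.2
    · rw [if_neg h]
  · have hy2 : y = ∑ γ ∈ Ind.filter (fun γ => ¬ f γ < 0), f γ • γ := by
      rw [← hsplit, hym0, add_zero]
    have hTP : Ind.filter (fun γ => ¬ f γ < 0) ⊆ P :=
      (Finset.filter_subset _ _).trans hIndP
    rw [hy2]
    calc ∑ γ ∈ Ind.filter (fun γ => ¬ f γ < 0), f γ • γ
        = ∑ γ ∈ Ind.filter (fun γ => ¬ f γ < 0),
            (if γ ∈ Ind ∧ ¬ f γ < 0 then f γ else 0) • γ := by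
          refine Finset.sum_congr rfl (fun γ hγ => ?_)
          rw [Finset.mem_filter] at hγ
          rw [if_pos ⟨hγ.1, hγ.2⟩]
      _ = ∑ γ ∈ P, (if γ ∈ Ind ∧ ¬ f γ < 0 then f γ else 0) • γ := by
          refine Finset.sum_subset hTP (fun x hx hxn => ?_)
          have hno : ¬ (x ∈ Ind ∧ ¬ f x < 0) := by
            intro h
            exact hxn (Finset.mem_filter.2 ⟨h.1, h.2⟩)
          rw [if_neg hno, zero_smul]

end domcone

end ICSP

namespace ICSP

variable {V : Type*} [NormedAddCommGroup V] [InnerProductSpace ℝ V]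

lemma z0_pos (Δ Δnc Ψ : Finset V)
    (hne : ∀ α ∈ Δ, α ≠ 0)
    (hcrys : ∀ α ∈ Δ, ∀ β ∈ Δ, ∃ k : ℤ, 2 * ⟪β, α⟫ / ⟪α, α⟫ = (k : ℝ))
    (hrefl : ∀ α ∈ Δ, ∀ β ∈ Δ, β - (2 * ⟪β, α⟫ / ⟪α, α⟫) • α ∈ Δ)
    (hred : ∀ α ∈ Δ, ∀ t : ℝ, t • α ∈ Δ → t • α = α ∨ t • α = -α)
    (hnle : Δnc ⊆ Δ) (hΨn : Ψ ⊆ Δnc)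
    (hΨneg : ∀ β ∈ Ψ, -β ∉ Ψ) (hΨsum : ∀ β ∈ Ψ, ∀ β' ∈ Ψ, β + β' ∉ Δ)
    {ψ : V} (hψ : ψ ∈ Ψ) : 0 < ⟪ψ, ∑ ψ' ∈ Ψ, ψ'⟫ := by
  rw [inner_sum]
  refine Finset.sum_pos' (fun ψ' hψ' => psi_pair Δ Δnc Ψ hne hcrys hrefl hred hnle hΨn
    hΨneg hΨsum hψ hψ') ⟨ψ, hψ, ips (hne ψ (hnle (hΨn hψ)))⟩

lemma span_inner_zero {S : Set V} {x : V} (h : ∀ γ ∈ S, ⟪x, γ⟫ = 0) :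
    ∀ u ∈ Submodule.span ℝ S, ⟪x, u⟫ = 0 := by
  intro u hu
  induction hu using Submodule.span_induction with
  | mem γ hγ => exact h γ hγ
  | zero => exact inner_zero_right x
  | add a b _ _ ha hb => rw [inner_add_right, ha, hb, add_zero]
  | smul t a _ ha => rw [real_inner_smul_right, ha, mul_zero]

end ICSP


open ICSP in
/-- **Lemma on noncompact roots of non-classical Hermitian-type flag domains.**
Let `Δ` be a finite reduced crystallographic reflection-closed root system in a real inner
product space, graded as `Δ = Δ_c ⊔ Δ_nc` compatibly with a Cartan decomposition.  Assume
some invariant complex structure exists (Hermitian type) and that the positive system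
`Δ₊` is non-classical (there are `β, β' ∈ Δ⁺_nc` with `β + β' ∈ Δ`).  Then there is an
invariant complex structure `Ψ` such that every `β ∈ Δ⁺_nc ∩ (-Ψ)` pairs strictly
positively with some compact positive root. -/
theorem exists_ics_forall_pos_inner_compact
    {V : Type*} [NormedAddCommGroup V] [InnerProductSpace ℝ V] [FiniteDimensional ℝ V]
    (Δ Δc Δnc Δp : Finset V)
    (hne : ∀ α ∈ Δ, α ≠ 0)
    (hcrys : ∀ α ∈ Δ, ∀ β ∈ Δ, ∃ k : ℤ, 2 * ⟪β, α⟫ / ⟪α, α⟫ = (k : ℝ))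
    (hrefl : ∀ α ∈ Δ, ∀ β ∈ Δ, β - (2 * ⟪β, α⟫ / ⟪α, α⟫) • α ∈ Δ)
    (hred : ∀ α ∈ Δ, ∀ t : ℝ, t • α ∈ Δ → t • α = α ∨ t • α = -α)
    -- `Δ = Δ_c ⊔ Δ_nc`, both stable under negation
    (hcle : Δc ⊆ Δ) (hnle : Δnc ⊆ Δ)
    (hcov : ∀ α ∈ Δ, α ∈ Δc ∨ α ∈ Δnc)
    (hdisj : ∀ α ∈ Δc, α ∉ Δnc)
    (hcneg : ∀ α ∈ Δc, -α ∈ Δc) (hncneg : ∀ α ∈ Δnc, -α ∈ Δnc)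
    -- the grading is compatible with addition of roots
    (hcc : ∀ α ∈ Δc, ∀ α' ∈ Δc, α + α' ∈ Δ → α + α' ∈ Δc)
    (hcn : ∀ α ∈ Δc, ∀ α' ∈ Δnc, α + α' ∈ Δ → α + α' ∈ Δnc)
    (hnn : ∀ α ∈ Δnc, ∀ α' ∈ Δnc, α + α' ∈ Δ → α + α' ∈ Δc)
    -- `Δ₊` is a positive system
    (hple : Δp ⊆ Δ)
    (hpcov : ∀ α ∈ Δ, α ∈ Δp ∨ -α ∈ Δp)
    (hpneg : ∀ α ∈ Δp, -α ∉ Δp)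
    (hpadd : ∀ α ∈ Δp, ∀ α' ∈ Δp, α + α' ∈ Δ → α + α' ∈ Δp)
    -- Hermitian type: at least one invariant complex structure exists
    (hherm : ∃ Ψ₀, IsInvariantComplexStructure Δ Δc Δnc Ψ₀)
    -- the positive system is non-classical
    (hnoncl : ∃ β ∈ Δp, β ∈ Δnc ∧ ∃ β' ∈ Δp, β' ∈ Δnc ∧ β + β' ∈ Δ) :
    ∃ Ψ, IsInvariantComplexStructure Δ Δc Δnc Ψ ∧
      ∀ β ∈ Δp, β ∈ Δnc → -β ∈ Ψ →
        ∃ α ∈ Δp, α ∈ Δc ∧ 0 < ⟪β, α⟫ := by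
  classical
  obtain ⟨Ψ₀, hΨ₀⟩ := hherm
  obtain ⟨hΨn, hΨcov, hΨneg, hΨsum, hΨcl⟩ := hΨ₀
  set K : Submodule ℝ V := Submodule.span ℝ (↑Δc : Set V) with hKdef
  -- the central element z₀ of the given complex structure
  set z₀ : V := ∑ ψ ∈ Ψ₀, ψ with hz₀def
  have hz₀c : ∀ α ∈ Δc, ⟪α, z₀⟫ = 0 := fun α hα =>
    z0_orth Δ Δc Δnc Ψ₀ hne hcrys hrefl hred hcle hnle hdisj hcneg hΨn hΨcl hα
  have hz₀K : ∀ x ∈ K, ⟪z₀, x⟫ = 0 := by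
    refine span_inner_zero (fun γ hγ => ?_)
    rw [real_inner_comm]
    exact hz₀c γ hγ
  have hz₀nc : ∀ β ∈ Δnc, ⟪β, z₀⟫ ≠ 0 := by
    intro β hβ
    rcases hΨcov β hβ with h | h
    · exact ne_of_gt (z0_pos Δ Δnc Ψ₀ hne hcrys hrefl hred hnle hΨn hΨneg hΨsum h)
    · have := z0_pos Δ Δnc Ψ₀ hne hcrys hrefl hred hnle hΨn hΨneg hΨsum h
      rw [inner_neg_left] at this
      intro h0
      rw [h0] at this
      simp at this
  -- the compact positive roots
  set Pc : Finset V := Δp ∩ Δc with hPcdef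
  have hPcmem : ∀ {α : V}, α ∈ Pc ↔ α ∈ Δp ∧ α ∈ Δc := fun {α} => Finset.mem_inter
  have hPcΔ : Pc ⊆ Δ := fun α hα => hple (hPcmem.1 hα).1
  have hPcsum : ∀ x ∈ Pc, ∀ y ∈ Pc, x + y ∈ Δ → x + y ∈ Pc := by
    intro x hx y hy hxy
    rw [hPcmem] at hx hy ⊢
    exact ⟨hpadd x hx.1 y hy.1 hxy, hcc x hx.2 y hy.2 hxy⟩
  have hPcneg : ∀ x ∈ Pc, -x ∉ Pc := by
    intro x hx hnx
    exact hpneg x (hPcmem.1 hx).1 (hPcmem.1 hnx).1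
  have hPcdiff : ∀ a ∈ Pc, ∀ b ∈ Pc, a - b ∈ Δ → (a - b ∈ Pc ∨ b - a ∈ Pc) := by
    intro a ha b hb hab
    have habc : a - b ∈ Δc := by
      have := hcc a (hPcmem.1 ha).2 (-b) (hcneg b (hPcmem.1 hb).2)
        (by rwa [← sub_eq_add_neg])
      rwa [← sub_eq_add_neg] at this
    rcases hpcov (a-b) hab with h | h
    · exact Or.inl (hPcmem.2 ⟨h, habc⟩)
    · refine Or.inr (hPcmem.2 ⟨by rwa [neg_sub] at h, ?_⟩)
      have := hcneg _ habc
      rwa [neg_sub] at this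
  -- the set of compact-antidominant positive noncompact roots
  set B : Finset V := Δp.filter (fun β => β ∈ Δnc ∧ ∀ α ∈ Pc, ⟪β, α⟫ ≤ 0) with hBdef
  have hBmem : ∀ {β : V}, β ∈ B ↔ β ∈ Δp ∧ β ∈ Δnc ∧ ∀ α ∈ Pc, ⟪β, α⟫ ≤ 0 := by
    intro β
    rw [hBdef, Finset.mem_filter]
  -- CRUX : two elements of B whose sum lies in span Δc give a contradiction
  have hcrux : ∀ β ∈ B, ∀ β' ∈ B, β + β' ∈ K → False := by
    intro β hβ β' hβ' hsumK
    rw [hBmem] at hβ hβ'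
    -- span Δc ≤ span Pc
    have hKle : K ≤ Submodule.span ℝ (↑Pc : Set V) := by
      rw [hKdef]
      refine Submodule.span_le.2 (fun α hα => ?_)
      rcases hpcov α (hcle hα) with h | h
      · exact Submodule.subset_span (hPcmem.2 ⟨h, hα⟩)
      · have : -α ∈ Pc := hPcmem.2 ⟨h, hcneg α hα⟩
        have h2 : -(-α) ∈ Submodule.span ℝ (↑Pc : Set V) :=
          Submodule.neg_mem _ (Submodule.subset_span this)
        rwa [neg_neg] at h2
    have hyspan : -(β + β') ∈ Submodule.span ℝ (↑Pc : Set V) :=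
      Submodule.neg_mem _ (hKle hsumK)
    have hydom : ∀ α ∈ Pc, 0 ≤ ⟪-(β + β'), α⟫ := by
      intro α hα
      rw [inner_neg_left, inner_add_left]
      have h1 := hβ.2.2 α hα
      have h2 := hβ'.2.2 α hα
      linarith
    obtain ⟨c, hc0, hcrep⟩ := dom_cone Δ hne hcrys hrefl hred Pc hPcΔ hPcsum hPcneg hPcdiff
      hyspan hydom
    have hrp : ∀ γ ∈ Δp, 0 < ⟪γ, ∑ γ' ∈ Δp, γ'⟫ := fun γ hγ =>
      rho_pos Δ hne hcrys hrefl hred Δp hple hpadd hpneg hγ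
    set rp := ∑ γ' ∈ Δp, γ' with hrpdef
    have hzero : β + β' + -(β + β') = 0 := by abel
    have hcontr : (0:ℝ) < ⟪β + β' + -(β + β'), rp⟫ := by
      rw [inner_add_left, inner_add_left]
      have h1 := hrp β hβ.1
      have h2 := hrp β' hβ'.1
      have h3 : 0 ≤ ⟪-(β + β'), rp⟫ := by
        rw [hcrep, sum_inner]
        refine Finset.sum_nonneg (fun γ hγ => ?_)
        rw [real_inner_smul_left]
        exact mul_nonneg (hc0 γ) (le_of_lt (hrp γ (hPcmem.1 hγ).1))
      linarith
    rw [hzero, inner_zero_left] at hcontr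
    exact lt_irrefl _ hcontr
  -- orthogonal projection onto K
  haveI : K.HasOrthogonalProjection := by infer_instance
  set Q : V → V := fun x => (K.orthogonalProjectionOnto x : V) with hQdef
  set Pr : V → V := fun x => x - Q x with hPrdef
  have hQK : ∀ x, Q x ∈ K := fun x => (K.orthogonalProjectionOnto x).2
  have hPrO : ∀ x, ∀ w ∈ K, ⟪Pr x, w⟫ = 0 := by
    intro x w hw
    exact K.starProjection_inner_eq_zero x w hw
  have hPrK0 : ∀ x ∈ K, Pr x = 0 := by
    intro x hx
    show x - Q x = 0
    have : Q x = x := by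
      rw [hQdef]
      exact K.starProjection_eq_self_iff.2 hx
    rw [this, sub_self]
  have hPrsub : ∀ x y, Pr x - Pr y = Pr (x - y) := by
    intro x y
    rw [hPrdef, hQdef]
    simp only
    rw [map_sub]
    push_cast
    abel
  -- the projection of a root lies in the span of compact roots connected to it
  have hQmem : ∀ x ∈ Δ, Q x ∈ Submodule.span ℝ {γ : V | γ ∈ Δc ∧ Conn Δ γ x} := by
    intro x hx
    set Kx := Submodule.span ℝ {γ : V | γ ∈ Δc ∧ Conn Δ γ x} with hKx
    haveI : Kx.HasOrthogonalProjection := by infer_instance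
    have hKxK : Kx ≤ K := by
      rw [hKx, hKdef]
      exact Submodule.span_mono (fun γ hγ => hγ.1)
    have hQeq : Q x = (Kx.orthogonalProjectionOnto x : V) := by
      rw [hQdef]
      refine Submodule.eq_starProjection_of_mem_of_inner_eq_zero (K := K)
        (hKxK (Kx.orthogonalProjectionOnto x).2) ?_
      intro w hw
      rw [hKdef] at hw
      induction hw using Submodule.span_induction with
      | mem α hα =>
        by_cases hconn : Conn Δ α x
        · exact Kx.starProjection_inner_eq_zero x α (Submodule.subset_span ⟨hα, hconn⟩)
        · have hxα : ⟪x, α⟫ = 0 := by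
            by_contra h0
            exact hconn (conn_symm (conn_single hx (hcle hα) h0))
          have huα : ⟪(Kx.orthogonalProjectionOnto x : V), α⟫ = 0 := by
            rw [real_inner_comm]
            refine span_inner_zero (fun γ hγ => ?_) _ (Kx.orthogonalProjectionOnto x).2
            by_contra h0
            exact hconn (conn_trans (conn_single (hcle hα) (hcle hγ.1) h0) hγ.2)
          rw [inner_sub_left, hxα, huα, sub_zero]
      | zero => exact inner_zero_right _
      | add a b _ _ ha hb => rw [inner_add_right, ha, hb, add_zero]
      | smul t a _ ha => rw [real_inner_smul_right, ha, mul_zero]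
    rw [hQeq]
    exact (Kx.orthogonalProjectionOnto x).2
  -- disconnected roots have orthogonal projections
  have hPdis : ∀ x ∈ Δ, ∀ y ∈ Δ, ¬ Conn Δ x y → ⟪Pr x, Pr y⟫ = 0 := by
    intro x hx y hy hnconn
    have hxy : ⟪x, y⟫ = 0 := by
      by_contra h0
      exact hnconn (conn_single hx hy h0)
    have hxQy : ⟪x, Q y⟫ = 0 := by
      refine span_inner_zero (fun γ hγ => ?_) _ (hQmem y hy)
      by_contra h0
      exact hnconn (conn_trans (conn_single hx (hcle hγ.1) h0) hγ.2)
    have hQxy : ⟪y, Q x⟫ = 0 := by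
      refine span_inner_zero (fun γ hγ => ?_) _ (hQmem x hx)
      by_contra h0
      exact hnconn (conn_symm (conn_trans (conn_single hy (hcle hγ.1) h0) hγ.2))
    have hQxQy : ⟪Q x, Q y⟫ = 0 := by
      rw [real_inner_comm]
      refine span_inner_zero (fun γ hγ => ?_) _ (hQmem x hx)
      rw [real_inner_comm]
      refine span_inner_zero (fun γ' hγ' => ?_) _ (hQmem y hy)
      by_contra h0
      exact hnconn (conn_trans (conn_symm hγ.2)
        (conn_trans (conn_single (hcle hγ.1) (hcle hγ'.1) h0) hγ'.2))
    rw [hPrdef]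
    simp only
    rw [inner_sub_left, inner_sub_right, inner_sub_right]
    rw [hxy, hxQy, real_inner_comm (Q x) y] at *
    rw [hQxy, hQxQy]
    ring
  -- main positivity of pairs of projections
  have hPmain : ∀ β ∈ B, ∀ β' ∈ B, 0 ≤ ⟪Pr β, Pr β'⟫ := by
    intro β hβ β' hβ'
    have hβB := hBmem.1 hβ
    have hβ'B := hBmem.1 hβ'
    by_cases hconn : Conn Δ β β'
    swap
    · rw [hPdis β (hple hβB.1) β' (hple hβ'B.1) hconn]
    rcases eq_or_ne β β' with he | hne2
    · rw [he]
      exact real_inner_self_nonneg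
    have hne3 : β ≠ -β' := by
      intro h
      exact hpneg β' hβ'B.1 (h ▸ hβB.1)
    rcases hΨcov β hβB.2.1 with hβΨ | hβΨ <;> rcases hΨcov β' hβ'B.2.1 with hβ'Ψ | hβ'Ψ
    · -- both in Ψ₀
      have hdiff := lemmaX Δ Δc Δnc Ψ₀ hne hcrys hrefl hred hcle hnle hdisj hcneg hncneg hnn
        hΨn hΨneg hΨsum hΨcl hcov hΨcov hβΨ hβ'Ψ hconn
      have : Pr β' - Pr β = 0 := by
        rw [hPrsub]
        exact hPrK0 _ hdiff
      rw [sub_eq_zero] at this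
      rw [← this]
      exact real_inner_self_nonneg
    · -- β ∈ Ψ₀, -β' ∈ Ψ₀ : contradiction
      exfalso
      have hconn2 : Conn Δ β (-β') := conn_neg_right (fun y hy => neg_mem Δ hne hrefl hy)
        hconn hne2
      have hdiff := lemmaX Δ Δc Δnc Ψ₀ hne hcrys hrefl hred hcle hnle hdisj hcneg hncneg hnn
        hΨn hΨneg hΨsum hΨcl hcov hΨcov hβΨ hβ'Ψ hconn2
      -- (-β') - β ∈ K hence β + β' ∈ K
      have : β + β' ∈ K := by
        have h2 := Submodule.neg_mem _ hdiff
        have he : -(-β' - β) = β + β' := by abel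
        rwa [he] at h2
      exact hcrux β hβ β' hβ' this
    · -- -β ∈ Ψ₀, β' ∈ Ψ₀ : contradiction
      exfalso
      have hconn2 : Conn Δ β' (-β) := conn_neg_right (fun y hy => neg_mem Δ hne hrefl hy)
        (conn_symm hconn) (Ne.symm hne2)
      have hdiff := lemmaX Δ Δc Δnc Ψ₀ hne hcrys hrefl hred hcle hnle hdisj hcneg hncneg hnn
        hΨn hΨneg hΨsum hΨcl hcov hΨcov hβ'Ψ hβΨ hconn2
      have : β + β' ∈ K := by
        have h2 := Submodule.neg_mem _ hdiff
        have he : -(-β - β') = β + β' := by abel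
        rwa [he] at h2
      exact hcrux β hβ β' hβ' this
    · -- both negatives in Ψ₀
      have hconn2 : Conn Δ (-β) (-β') := by
        have h1 : Conn Δ β (-β') := conn_neg_right (fun y hy => neg_mem Δ hne hrefl hy)
          hconn hne2
        have h2 : Conn Δ (-β') β := conn_symm h1
        have h3 : Conn Δ (-β') (-β) := conn_neg_right (fun y hy => neg_mem Δ hne hrefl hy)
          h2 (by intro h; exact hne3 h.symm)
        exact conn_symm h3
      have hdiff := lemmaX Δ Δc Δnc Ψ₀ hne hcrys hrefl hred hcle hnle hdisj hcneg hncneg hnn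
        hΨn hΨneg hΨsum hΨcl hcov hΨcov hβΨ hβ'Ψ hconn2
      have : Pr β - Pr β' = 0 := by
        rw [hPrsub]
        refine hPrK0 _ ?_
        have he : β - β' = -β' - -β := by abel
        rwa [he]
      rw [sub_eq_zero] at this
      rw [this]
      exact real_inner_self_nonneg
  -- the vector z₁ and the perturbation
  set z₁ : V := ∑ β ∈ B, Pr β with hz₁def
  have hz₁K : ∀ w ∈ K, ⟪w, z₁⟫ = 0 := by
    intro w hw
    rw [hz₁def, inner_sum]
    refine Finset.sum_eq_zero (fun β hβ => ?_)
    rw [real_inner_comm]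
    exact hPrO β w hw
  have hPrne : ∀ β ∈ B, Pr β ≠ 0 := by
    intro β hβ h0
    have hβB := hBmem.1 hβ
    have : β ∈ K := by
      have : β - Q β = 0 := h0
      rw [sub_eq_zero] at this
      rw [this]
      exact hQK β
    exact hz₀nc β hβB.2.1 (by rw [real_inner_comm]; exact hz₀K β this)
  have hz₁B : ∀ β ∈ B, 0 < ⟪β, z₁⟫ := by
    intro β hβ
    have hsplit : ⟪β, z₁⟫ = ∑ β' ∈ B, ⟪Pr β, Pr β'⟫ := by
      rw [hz₁def, inner_sum]
      refine Finset.sum_congr rfl (fun β' hβ' => ?_)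
      have : ⟪Q β, Pr β'⟫ = 0 := by
        rw [real_inner_comm]
        exact hPrO β' (Q β) (hQK β)
      have hexp : ⟪β, Pr β'⟫ = ⟪Pr β, Pr β'⟫ + ⟪Q β, Pr β'⟫ := by
        rw [hPrdef]
        simp only
        rw [inner_sub_left]
        ring
      rw [hexp, this, add_zero]
    rw [hsplit]
    have hself : 0 < ⟪Pr β, Pr β⟫ := ips (hPrne β hβ)
    refine lt_of_lt_of_le hself ?_
    exact Finset.single_le_sum (fun β' hβ' => hPmain β hβ β' hβ') hβ
  -- choice of ε
  set S : Finset ℝ := (Δnc.image (fun γ => -⟪γ, z₁⟫ / ⟪γ, z₀⟫)).filter (fun t => 0 < t)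
    with hSdef
  set ε : ℝ := if hS : S.Nonempty then S.min' hS / 2 else 1 with hεdef
  have hSpos : ∀ t ∈ S, 0 < t := by
    intro t ht
    rw [hSdef, Finset.mem_filter] at ht
    exact ht.2
  have hε : 0 < ε := by
    rw [hεdef]
    split_ifs with hS
    · have := hSpos _ (S.min'_mem hS)
      linarith
    · norm_num
  have hεlt : ∀ t ∈ S, ε < t := by
    intro t ht
    have hS : S.Nonempty := ⟨t, ht⟩
    rw [hεdef, dif_pos hS]
    have h1 := S.min'_le t ht
    have h2 := hSpos _ (S.min'_mem hS)
    linarith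
  set z : V := z₁ + ε • z₀ with hzdef
  have hzc : ∀ α ∈ Δc, ⟪α, z⟫ = 0 := by
    intro α hα
    rw [hzdef, inner_add_right, real_inner_smul_right, hz₀c α hα,
      hz₁K α (Submodule.subset_span hα), mul_zero, add_zero]
  have hznc : ∀ γ ∈ Δnc, ⟪γ, z⟫ ≠ 0 := by
    intro γ hγ h0
    rw [hzdef, inner_add_right, real_inner_smul_right] at h0
    have hγz₀ := hz₀nc γ hγ
    have ht : -⟪γ, z₁⟫ / ⟪γ, z₀⟫ = ε := by
      field_simp
      linarith
    have htS : ε ∈ S := by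
      rw [hSdef, Finset.mem_filter]
      exact ⟨Finset.mem_image.2 ⟨γ, hγ, ht⟩, hε⟩
    exact lt_irrefl ε (hεlt ε htS)
  have hzB : ∀ β ∈ B, 0 < ⟪β, z⟫ := by
    intro β hβ
    have hβB := hBmem.1 hβ
    rw [hzdef, inner_add_right, real_inner_smul_right]
    rcases le_or_gt 0 ⟪β, z₀⟫ with h | h
    · have := hz₁B β hβ
      nlinarith
    · have ht : 0 < -⟪β, z₁⟫ / ⟪β, z₀⟫ := by
        apply div_pos_of_neg_of_neg
        · simp only [neg_neg, Left.neg_neg_iff]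
          exact hz₁B β hβ
        · exact h
      have htS : -⟪β, z₁⟫ / ⟪β, z₀⟫ ∈ S := by
        rw [hSdef, Finset.mem_filter]
        exact ⟨Finset.mem_image.2 ⟨β, hβB.2.1, rfl⟩, ht⟩
      have := hεlt _ htS
      rw [lt_div_iff_of_neg h] at this
      linarith
  -- conclusion
  refine ⟨Δnc.filter (fun γ => 0 < ⟪γ, z⟫), ⟨Finset.filter_subset _ _, ?_, ?_, ?_, ?_⟩, ?_⟩
  · -- covering
    intro β hβ
    rcases lt_or_gt_of_ne (hznc β hβ) with h | h
    · right
      rw [Finset.mem_filter]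
      refine ⟨hncneg β hβ, ?_⟩
      rw [inner_neg_left]
      linarith
    · left
      rw [Finset.mem_filter]
      exact ⟨hβ, h⟩
  · -- no opposite pairs
    intro β hβ hnβ
    rw [Finset.mem_filter] at hβ hnβ
    rw [inner_neg_left] at hnβ
    linarith [hβ.2, hnβ.2]
  · -- sums are not roots
    intro β hβ β' hβ' hsum
    rw [Finset.mem_filter] at hβ hβ'
    have hc : β + β' ∈ Δc := hnn β hβ.1 β' hβ'.1 hsum
    have := hzc _ hc
    rw [inner_add_left] at this
    linarith [hβ.2, hβ'.2]
  · -- closure under adding compact roots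
    intro α hα ψ hψ hsum
    rw [Finset.mem_filter] at hψ ⊢
    refine ⟨hcn α hα ψ hψ.1 hsum, ?_⟩
    rw [inner_add_left, hzc α hα, zero_add]
    exact hψ.2
  · -- final positivity property
    intro β hβp hβnc hβΨ
    rw [Finset.mem_filter, inner_neg_left] at hβΨ
    have hβz : ⟪β, z⟫ < 0 := by linarith [hβΨ.2]
    have hβnB : β ∉ B := by
      intro hB2
      exact absurd (hzB β hB2) (by linarith)
    rw [hBmem] at hβnB
    push_neg at hβnB
    obtain ⟨α, hα, hα2⟩ := hβnB hβp hβnc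
    exact ⟨α, (hPcmem.1 hα).1, (hPcmem.1 hα).2, by linarith⟩
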